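/- The geodesic growth function of Ĥ with respect to S = {a, a⁻¹, t} satisfies γ_S(n) ≤ Σ_{r=0}^{n} Σ_{k=0}^{7} 2^{k+1}·C(r,k) for all n ∈ ℕ; in particular, γ_S(n) is bounded above by a polynomial in n of degree 8. -/

import Mathlib

/-- The three generators `a, b, t` of the virtually Heisenberg group `Ĥ`. -/
inductive VGen : Type
  | a | b | t
deriving DecidableEq

open scoped commutatorElement

/-- Relators of the virtually Heisenberg group
`Ĥ = ⟨a,b,t ∣ [a,[a,b]] = [b,[a,b]] = t² = 1, tat = b⟩`. -/
def VRels : Set (FreeGroup VGen) :=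
  { ⁅FreeGroup.of VGen.a, ⁅FreeGroup.of VGen.a, FreeGroup.of VGen.b⁆⁆,
    ⁅FreeGroup.of VGen.b, ⁅FreeGroup.of VGen.a, FreeGroup.of VGen.b⁆⁆,
    FreeGroup.of VGen.t ^ 2,
    FreeGroup.of VGen.t * FreeGroup.of VGen.a * FreeGroup.of VGen.t *
      (FreeGroup.of VGen.b)⁻¹ }

/-- The virtually Heisenberg group `Ĥ`. -/
abbrev VH : Type := PresentedGroup VRels

/-- The generator `a` of `Ĥ`. -/
def Va : VH := PresentedGroup.of VGen.a

/-- The generator `b` of `Ĥ`. -/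
def Vb : VH := PresentedGroup.of VGen.b

/-- The generator `t` of `Ĥ`. -/
def Vt : VH := PresentedGroup.of VGen.t

/-- The three letters of the alphabet `S = {a, a⁻¹, t}`. -/
inductive SLetter : Type
  | a | A | t
deriving DecidableEq

/-- The element of `Ĥ` represented by a letter of `S`. -/
def SLetter.toV : SLetter → VH
  | .a => Va
  | .A => Va⁻¹
  | .t => Vt

/-- The element of `Ĥ` represented by a word over `S`. -/
def evalS (w : List SLetter) : VH := (w.map SLetter.toV).prod

/-- The word `a^k` over `S`, for `k ∈ ℤ`. -/
def apowS (k : ℤ) : List SLetter :=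
  if 0 ≤ k then List.replicate k.toNat SLetter.a else List.replicate (-k).toNat SLetter.A

/-- The word length `ℓ_S(g)` of `g ∈ Ĥ` with respect to `S`. -/
noncomputable def lenS (g : VH) : ℕ :=
  sInf { n | ∃ w : List SLetter, evalS w = g ∧ w.length = n }

/-- A word over `S` is geodesic if its length equals the word length of the
element it represents. -/
def IsGeodesicS (w : List SLetter) : Prop := w.length = lenS (evalS w)

/-- The geodesic growth function `γ_S` of `Ĥ` with respect to `S = {a, a⁻¹, t}`:
the number of geodesic words over `S` of length at most `n`. -/
noncomputable def geodesicGrowthS (n : ℕ) : ℕ :=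
  Set.ncard { w : List SLetter | IsGeodesicS w ∧ w.length ≤ n }

namespace VHW


noncomputable def Vz : VH := ⁅Va, Vb⁆

lemma rel_eq_one {r : FreeGroup VGen} (h : r ∈ VRels) : PresentedGroup.mk VRels r = 1 := by
  exact (QuotientGroup.eq_one_iff r).mpr (Subgroup.subset_normalClosure h)

lemma rel1 : ⁅Va, Vz⁆ = 1 := by
  have := rel_eq_one (show _ ∈ VRels from Or.inl rfl)
  rw [map_commutatorElement, map_commutatorElement] at this
  exact this

lemma rel2 : ⁅Vb, Vz⁆ = 1 := by
  have := rel_eq_one (show _ ∈ VRels from Or.inr (Or.inl rfl))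
  rw [map_commutatorElement, map_commutatorElement] at this
  exact this

lemma rel3 : Vt * Vt = 1 := by
  have := rel_eq_one (show _ ∈ VRels from Or.inr (Or.inr (Or.inl rfl)))
  rw [map_pow] at this
  rw [← pow_two]
  exact this

lemma rel4 : Vt * Va * Vt = Vb := by
  have := rel_eq_one (show _ ∈ VRels from Or.inr (Or.inr (Or.inr rfl)))
  rw [map_mul, map_mul, map_mul, map_inv] at this
  have h := mul_eq_one_iff_eq_inv.mp this
  rw [inv_inv] at h
  exact h

lemma comm_za : Commute Vz Va := (commutatorElement_eq_one_iff_commute.mp rel1).symm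
lemma comm_zb : Commute Vz Vb := (commutatorElement_eq_one_iff_commute.mp rel2).symm

lemma ba : Vb * Va = Vz⁻¹ * (Va * Vb) := by
  have : Vz * (Vb * Va) = Va * Vb := by
    rw [Vz, commutatorElement_def]
    group
  rw [← this]; group

lemma c1 : Va * Vb * Va⁻¹ = Vz * Vb := by
  rw [Vz, commutatorElement_def]; group

lemma z_a_swap (m : ℤ) : Va * Vz ^ m = Vz ^ m * Va := (comm_za.zpow_left m).symm.eq

lemma z_ainv_swap (m : ℤ) : Va⁻¹ * Vz ^ m = Vz ^ m * Va⁻¹ :=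
  ((comm_za.zpow_left m).inv_right).symm.eq

lemma c2 : Va⁻¹ * Vb * Va = Vz⁻¹ * Vb := by
  calc Va⁻¹ * Vb * Va = Va⁻¹ * (Vb * Va) := by group
    _ = Va⁻¹ * (Vz⁻¹ * (Va * Vb)) := by rw [ba]
    _ = (Va⁻¹ * Vz ^ (-1 : ℤ)) * (Va * Vb) := by group
    _ = Vz ^ (-1 : ℤ) * (Va⁻¹ * (Va * Vb)) := by rw [z_ainv_swap]; group
    _ = Vz⁻¹ * Vb := by group

lemma conj_a_bm (m : ℤ) : Va * Vb ^ m * Va⁻¹ = Vz ^ m * Vb ^ m := by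
  have h1 : (MulAut.conj Va) (Vb ^ m) = ((MulAut.conj Va) Vb) ^ m := map_zpow _ _ _
  simp only [MulAut.conj_apply] at h1
  rw [h1, c1, comm_zb.mul_zpow]

lemma conj_ainv_bm (m : ℤ) : Va⁻¹ * Vb ^ m * Va = Vz ^ (-m) * Vb ^ m := by
  have h1 : (MulAut.conj Va⁻¹) (Vb ^ m) = ((MulAut.conj Va⁻¹) Vb) ^ m := map_zpow _ _ _
  simp only [MulAut.conj_apply, inv_inv] at h1
  rw [h1, c2, (comm_zb.inv_left).mul_zpow]; group

lemma key_ba (m : ℤ) : Vb ^ m * Va = Vz ^ (-m) * (Va * Vb ^ m) := by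
  calc Vb ^ m * Va = Va * (Va⁻¹ * Vb ^ m * Va) := by group
    _ = Va * (Vz ^ (-m) * Vb ^ m) := by rw [conj_ainv_bm]
    _ = Vz ^ (-m) * (Va * Vb ^ m) := by
          rw [← mul_assoc, z_a_swap, mul_assoc]

lemma key_ba_inv (m : ℤ) : Vb ^ m * Va⁻¹ = Vz ^ m * (Va⁻¹ * Vb ^ m) := by
  calc Vb ^ m * Va⁻¹ = Va⁻¹ * (Va * Vb ^ m * Va⁻¹) := by group
    _ = Va⁻¹ * (Vz ^ m * Vb ^ m) := by rw [conj_a_bm]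
    _ = Vz ^ m * (Va⁻¹ * Vb ^ m) := by
          rw [← mul_assoc, z_ainv_swap, mul_assoc]

lemma tinv : Vt⁻¹ = Vt := (eq_inv_of_mul_eq_one_left rel3).symm

lemma ta : Vt * Va = Vb * Vt := by
  calc Vt * Va = (Vt * Va * Vt) * Vt := by rw [mul_assoc, mul_assoc, rel3, mul_one]
    _ = Vb * Vt := by rw [rel4]

lemma ta_inv : Vt * Va⁻¹ = Vb⁻¹ * Vt := by
  have h : Vt * Va⁻¹ * Vt = Vb⁻¹ := by
    have h2 : (Vt * Va * Vt)⁻¹ = Vb⁻¹ := by rw [rel4]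
    rw [← h2, mul_inv_rev, mul_inv_rev, tinv, mul_assoc]
  calc Vt * Va⁻¹ = (Vt * Va⁻¹ * Vt) * Vt := by rw [mul_assoc, mul_assoc, rel3, mul_one]
    _ = Vb⁻¹ * Vt := by rw [h]



lemma z_apow_swap (n m : ℤ) : Va ^ n * Vz ^ m = Vz ^ m * Va ^ n :=
  (comm_za.zpow_zpow m n).symm.eq

/-- state of the letter-by-letter evaluation fold. -/
structure St where
  U : ℤ
  V : ℤ
  q : ℤ
  c : ℤ
  be : ℤ
  M : ℤ
  d : ℤ
  e : Bool

def step (s : St) : SLetter → St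
  | .a => if s.e then { s with q := s.q + 1, be := s.be + 1, M := max s.M (s.q + 1) }
          else { s with U := s.U + 1, c := s.c - s.q }
  | .A => if s.e then { s with q := s.q - 1, be := s.be + 1, d := max s.d (-(s.q - 1)) }
          else { s with V := s.V + 1, c := s.c + s.q }
  | .t => { s with e := !s.e }

def st0 : St := ⟨0,0,0,0,0,0,0,false⟩

def dat (w : List SLetter) : St := w.foldl step st0

noncomputable def Phi (s : St) : VH :=
  Vz ^ s.c * Va ^ (s.U - s.V) * Vb ^ s.q * (cond s.e Vt 1)

lemma evalS_append (u v : List SLetter) : evalS (u ++ v) = evalS u * evalS v := by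
  simp [evalS]

lemma evalS_singleton (x : SLetter) : evalS [x] = x.toV := by simp [evalS]

lemma Phi_step (s : St) (l : SLetter) : Phi (step s l) = Phi s * l.toV := by
  cases l with
  | t =>
    cases he : s.e
    · simp only [step, Phi, he, SLetter.toV, cond_false, cond_true, Bool.not_false, mul_one]
    · simp only [step, Phi, he, SLetter.toV, cond_false, cond_true, Bool.not_true]
      rw [mul_one, mul_assoc, mul_assoc, rel3, mul_one]
  | a =>
    cases he : s.e
    · have hst : step s .a = ⟨s.U + 1, s.V, s.q, s.c - s.q, s.be, s.M, s.d, false⟩ := by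
        simp [step, he]
      rw [hst]
      simp only [Phi, he, cond_false, mul_one, SLetter.toV]
      have : Vz ^ s.c * Va ^ (s.U - s.V) * Vb ^ s.q * Va
          = Vz ^ (s.c - s.q) * Va ^ (s.U + 1 - s.V) * Vb ^ s.q := by
        calc Vz ^ s.c * Va ^ (s.U - s.V) * Vb ^ s.q * Va
            = Vz ^ s.c * Va ^ (s.U - s.V) * (Vb ^ s.q * Va) := by rw [mul_assoc]
          _ = Vz ^ s.c * Va ^ (s.U - s.V) * (Vz ^ (-s.q) * (Va * Vb ^ s.q)) := by rw [key_ba]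
          _ = Vz ^ s.c * (Va ^ (s.U - s.V) * Vz ^ (-s.q)) * (Va * Vb ^ s.q) := by group
          _ = Vz ^ s.c * (Vz ^ (-s.q) * Va ^ (s.U - s.V)) * (Va * Vb ^ s.q) := by
              rw [z_apow_swap]
          _ = Vz ^ (s.c - s.q) * Va ^ (s.U + 1 - s.V) * Vb ^ s.q := by group
      exact this.symm
    · have hst : step s .a
          = ⟨s.U, s.V, s.q + 1, s.c, s.be + 1, max s.M (s.q + 1), s.d, true⟩ := by
        simp [step, he]
      rw [hst]
      simp only [Phi, he, cond_true, SLetter.toV]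
      have : Vz ^ s.c * Va ^ (s.U - s.V) * Vb ^ s.q * Vt * Va
          = Vz ^ s.c * Va ^ (s.U - s.V) * Vb ^ (s.q + 1) * Vt := by
        calc Vz ^ s.c * Va ^ (s.U - s.V) * Vb ^ s.q * Vt * Va
            = Vz ^ s.c * Va ^ (s.U - s.V) * Vb ^ s.q * (Vt * Va) := by group
          _ = Vz ^ s.c * Va ^ (s.U - s.V) * Vb ^ s.q * (Vb * Vt) := by rw [ta]
          _ = Vz ^ s.c * Va ^ (s.U - s.V) * Vb ^ (s.q + 1) * Vt := by group
      exact this.symm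
  | A =>
    cases he : s.e
    · have hst : step s .A = ⟨s.U, s.V + 1, s.q, s.c + s.q, s.be, s.M, s.d, false⟩ := by
        simp [step, he]
      rw [hst]
      simp only [Phi, he, cond_false, mul_one, SLetter.toV]
      have : Vz ^ s.c * Va ^ (s.U - s.V) * Vb ^ s.q * Va⁻¹
          = Vz ^ (s.c + s.q) * Va ^ (s.U - (s.V + 1)) * Vb ^ s.q := by
        calc Vz ^ s.c * Va ^ (s.U - s.V) * Vb ^ s.q * Va⁻¹
            = Vz ^ s.c * Va ^ (s.U - s.V) * (Vb ^ s.q * Va⁻¹) := by rw [mul_assoc]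
          _ = Vz ^ s.c * Va ^ (s.U - s.V) * (Vz ^ s.q * (Va⁻¹ * Vb ^ s.q)) := by
              rw [key_ba_inv]
          _ = Vz ^ s.c * (Va ^ (s.U - s.V) * Vz ^ s.q) * (Va⁻¹ * Vb ^ s.q) := by group
          _ = Vz ^ s.c * (Vz ^ s.q * Va ^ (s.U - s.V)) * (Va⁻¹ * Vb ^ s.q) := by
              rw [z_apow_swap]
          _ = Vz ^ (s.c + s.q) * Va ^ (s.U - (s.V + 1)) * Vb ^ s.q := by group
      exact this.symm
    · have hst : step s .A
          = ⟨s.U, s.V, s.q - 1, s.c, s.be + 1, s.M, max s.d (-(s.q - 1)), true⟩ := by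
        simp [step, he]
      rw [hst]
      simp only [Phi, he, cond_true, SLetter.toV]
      have : Vz ^ s.c * Va ^ (s.U - s.V) * Vb ^ s.q * Vt * Va⁻¹
          = Vz ^ s.c * Va ^ (s.U - s.V) * Vb ^ (s.q - 1) * Vt := by
        calc Vz ^ s.c * Va ^ (s.U - s.V) * Vb ^ s.q * Vt * Va⁻¹
            = Vz ^ s.c * Va ^ (s.U - s.V) * Vb ^ s.q * (Vt * Va⁻¹) := by group
          _ = Vz ^ s.c * Va ^ (s.U - s.V) * Vb ^ s.q * (Vb⁻¹ * Vt) := by rw [ta_inv]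
          _ = Vz ^ s.c * Va ^ (s.U - s.V) * Vb ^ (s.q - 1) * Vt := by group
      exact this.symm

lemma EV (w : List SLetter) : evalS w = Phi (dat w) := by
  induction w using List.reverseRecOn with
  | nil =>
    simp [evalS, dat, st0, Phi]
  | append_singleton l x ih =>
    rw [evalS_append, evalS_singleton, ih]
    have : dat (l ++ [x]) = step (dat l) x := by
      simp [dat, List.foldl_append]
    rw [this, Phi_step]

/-- ghost invariant -/
def Inv (s : St) : Prop :=
  0 ≤ s.U ∧ 0 ≤ s.V ∧ 0 ≤ s.M ∧ 0 ≤ s.d ∧ s.q ≤ s.M ∧ -s.q ≤ s.d ∧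
  2*(s.M + s.d) - |s.q| ≤ s.be ∧
  -(s.U * s.M + s.V * s.d) ≤ s.c ∧ s.c ≤ s.V * s.M + s.U * s.d

lemma inv_st0 : Inv st0 := by
  simp [Inv, st0]

lemma inv_step (s : St) (l : SLetter) (h : Inv s) : Inv (step s l) := by
  obtain ⟨hU, hV, hM, hd, hqM, hqd, hbe, hc1, hc2⟩ := h
  cases l with
  | t =>
    have hst : step s .t = ⟨s.U, s.V, s.q, s.c, s.be, s.M, s.d, !s.e⟩ := by simp [step]
    rw [hst]
    exact ⟨hU, hV, hM, hd, hqM, hqd, hbe, hc1, hc2⟩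
  | a =>
    cases he : s.e
    · have hst : step s .a = ⟨s.U + 1, s.V, s.q, s.c - s.q, s.be, s.M, s.d, false⟩ := by
        simp [step, he]
      rw [hst]; unfold Inv; dsimp only
      refine ⟨by linarith, hV, hM, hd, hqM, hqd, hbe, by nlinarith, by nlinarith⟩
    · have hst : step s .a
          = ⟨s.U, s.V, s.q + 1, s.c, s.be + 1, max s.M (s.q + 1), s.d, true⟩ := by
        simp [step, he]
      rw [hst]; unfold Inv; dsimp only
      have hMM : s.M ≤ max s.M (s.q + 1) := le_max_left _ _
      have hUM : s.U * s.M ≤ s.U * max s.M (s.q + 1) := mul_le_mul_of_nonneg_left hMM hU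
      have hVM : s.V * s.M ≤ s.V * max s.M (s.q + 1) := mul_le_mul_of_nonneg_left hMM hV
      refine ⟨hU, hV, le_trans hM hMM, hd, le_max_right _ _, by linarith,
        ?_, by linarith, by linarith⟩
      rcases le_or_gt (s.q + 1) s.M with hcase | hcase
      · rw [max_eq_left hcase]
        rcases abs_cases s.q with ⟨h1, h2⟩ | ⟨h1, h2⟩ <;>
          rcases abs_cases (s.q + 1) with ⟨h3, h4⟩ | ⟨h3, h4⟩ <;> linarith
      · rw [max_eq_right (by linarith)]
        have hq0 : 0 ≤ s.q := by
          by_contra hq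
          push_neg at hq
          have : s.q + 1 ≤ 0 := by linarith
          have : s.q + 1 ≤ s.M := by linarith
          linarith
        rw [abs_of_nonneg (by linarith : (0:ℤ) ≤ s.q + 1)]
        rw [abs_of_nonneg hq0] at hbe
        linarith
  | A =>
    cases he : s.e
    · have hst : step s .A = ⟨s.U, s.V + 1, s.q, s.c + s.q, s.be, s.M, s.d, false⟩ := by
        simp [step, he]
      rw [hst]; unfold Inv; dsimp only
      refine ⟨hU, by linarith, hM, hd, hqM, hqd, hbe, by nlinarith, by nlinarith⟩
    · have hst : step s .A
          = ⟨s.U, s.V, s.q - 1, s.c, s.be + 1, s.M, max s.d (-(s.q - 1)), true⟩ := by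
        simp [step, he]
      rw [hst]; unfold Inv; dsimp only
      have hdd : s.d ≤ max s.d (-(s.q - 1)) := le_max_left _ _
      have hUd : s.U * s.d ≤ s.U * max s.d (-(s.q - 1)) := mul_le_mul_of_nonneg_left hdd hU
      have hVd : s.V * s.d ≤ s.V * max s.d (-(s.q - 1)) := mul_le_mul_of_nonneg_left hdd hV
      refine ⟨hU, hV, hM, le_trans hd hdd, by linarith, le_max_right _ _,
        ?_, by linarith, by linarith⟩
      rcases le_or_gt (-(s.q - 1)) s.d with hcase | hcase
      · rw [max_eq_left hcase]
        rcases abs_cases s.q with ⟨h1, h2⟩ | ⟨h1, h2⟩ <;>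
          rcases abs_cases (s.q - 1) with ⟨h3, h4⟩ | ⟨h3, h4⟩ <;> linarith
      · rw [max_eq_right (by linarith)]
        have hq0 : s.q ≤ 0 := by
          by_contra hq
          push_neg at hq
          have h1 : 0 ≤ s.q - 1 := by linarith
          have : -(s.q - 1) ≤ 0 := by linarith
          linarith
        rw [abs_of_nonpos (by linarith : s.q - 1 ≤ 0)]
        rw [abs_of_nonpos hq0] at hbe
        linarith

lemma inv_dat (w : List SLetter) : Inv (dat w) := by
  induction w using List.reverseRecOn with
  | nil => exact inv_st0
  | append_singleton l x ih =>
    have : dat (l ++ [x]) = step (dat l) x := by simp [dat, List.foldl_append]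
    rw [this]; exact inv_step _ _ ih

/-- length bookkeeping -/
lemma dat_len (w : List SLetter) :
    (dat w).U + (dat w).V + (dat w).be + (w.count SLetter.t : ℤ) = w.length := by
  induction w using List.reverseRecOn with
  | nil => simp [dat, st0]
  | append_singleton l x ih =>
    have hd : dat (l ++ [x]) = step (dat l) x := by simp [dat, List.foldl_append]
    rw [hd]
    rw [List.count_append, List.length_append]
    simp only [List.length_singleton]
    cases x with
    | t =>
      have hco : List.count SLetter.t [SLetter.t] = 1 := by decide
      have hst : step (dat l) .t = ⟨(dat l).U, (dat l).V, (dat l).q, (dat l).c,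
          (dat l).be, (dat l).M, (dat l).d, !(dat l).e⟩ := by simp [step]
      rw [hst, hco]; dsimp only
      push_cast
      push_cast at ih
      linarith
    | a =>
      have hco : List.count SLetter.t [SLetter.a] = 0 := by decide
      rw [hco]
      cases he : (dat l).e
      · have hst : step (dat l) .a = ⟨(dat l).U + 1, (dat l).V, (dat l).q, (dat l).c - (dat l).q,
            (dat l).be, (dat l).M, (dat l).d, false⟩ := by simp [step, he]
        rw [hst]; dsimp only
        push_cast
        push_cast at ih
        linarith
      · have hst : step (dat l) .a = ⟨(dat l).U, (dat l).V, (dat l).q + 1, (dat l).c,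
            (dat l).be + 1, max (dat l).M ((dat l).q + 1), (dat l).d, true⟩ := by simp [step, he]
        rw [hst]; dsimp only
        push_cast
        push_cast at ih
        linarith
    | A =>
      have hco : List.count SLetter.t [SLetter.A] = 0 := by decide
      rw [hco]
      cases he : (dat l).e
      · have hst : step (dat l) .A = ⟨(dat l).U, (dat l).V + 1, (dat l).q, (dat l).c + (dat l).q,
            (dat l).be, (dat l).M, (dat l).d, false⟩ := by simp [step, he]
        rw [hst]; dsimp only
        push_cast
        push_cast at ih
        linarith
      · have hst : step (dat l) .A = ⟨(dat l).U, (dat l).V, (dat l).q - 1, (dat l).c,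
            (dat l).be + 1, (dat l).M, max (dat l).d (-((dat l).q - 1)), true⟩ := by simp [step, he]
        rw [hst]; dsimp only
        push_cast
        push_cast at ih
        linarith


lemma Phi_proj (s s' : St) (h1 : s.U - s.V = s'.U - s'.V) (h2 : s.q = s'.q)
    (h3 : s.c = s'.c) (h4 : s.e = s'.e) : Phi s = Phi s' := by
  unfold Phi
  rw [h1, h2, h3, h4]

lemma tt1 : SLetter.toV .t * SLetter.toV .t = 1 := by
  simp only [SLetter.toV]; exact rel3

lemma aA1 : SLetter.toV .a * SLetter.toV .A = 1 := by
  simp only [SLetter.toV]; exact mul_inv_cancel Va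

lemma Aa1 : SLetter.toV .A * SLetter.toV .a = 1 := by
  simp only [SLetter.toV]; exact inv_mul_cancel Va




/-- division with remainder packaged for the constructions -/
lemma REP (C T K : ℤ) (h0 : 0 ≤ C) (hT : 0 < T) (hK : C ≤ K * T) :
    ∃ u w r : ℤ, 0 ≤ u ∧ 0 ≤ w ∧ w ≤ 1 ∧ 0 ≤ r ∧ r ≤ T ∧ u + w ≤ K ∧ u * T + w * r = C := by
  have hTne : T ≠ 0 := ne_of_gt hT
  have hdm : T * (C / T) + C % T = C := Int.mul_ediv_add_emod C T
  have hr0 : 0 ≤ C % T := Int.emod_nonneg C hTne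
  have hrT : C % T < T := Int.emod_lt_of_pos C hT
  have hu0 : 0 ≤ C / T := Int.ediv_nonneg h0 (le_of_lt hT)
  by_cases hrz : C % T = 0
  · refine ⟨C / T, 0, C % T, hu0, le_refl 0, by norm_num, hr0, le_of_lt hrT, ?_, by linarith⟩
    have : C / T ≤ (K * T) / T := Int.ediv_le_ediv hT hK
    rw [Int.mul_ediv_cancel _ hTne] at this
    linarith
  · refine ⟨C / T, 1, C % T, hu0, by norm_num, le_refl 1, hr0, le_of_lt hrT, ?_, by linarith⟩
    have hlt : (C / T) * T < C := by
      have : 0 < C % T := lt_of_le_of_ne hr0 (Ne.symm hrz)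
      linarith
    have : (C / T) * T < K * T := lt_of_lt_of_le hlt hK
    have := lt_of_mul_lt_mul_right this (le_of_lt hT)
    linarith

/-- the core construction, for `q ≥ 0` and `ct ≥ 0`. -/
lemma arith_core (U V M d be q ct : ℤ)
    (hU : 0 ≤ U) (hV : 0 ≤ V) (hM : 0 ≤ M) (hd : 0 ≤ d)
    (hq0 : 0 ≤ q) (hqM : q ≤ M)
    (hbe : 2 * (M + d) - q ≤ be)
    (hct0 : 0 ≤ ct) (hcap : ct ≤ U * M + V * d) :
    ∃ x2 x3 x4 Y1 Y2 : ℤ,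
      |U - V - (x2 + x3 + x4)| + |x2| + |x3| + |x4| ≤ U + V ∧
      |Y1| + |Y2 - Y1| + |q - Y2| ≤ be ∧
      x2 * Y1 + x3 * Y2 + x4 * q = ct := by
  have hbq : q ≤ be := by linarith
  by_cases hc0 : ct = 0
  · refine ⟨0, 0, 0, 0, 0, ?_, ?_, by simp [hc0]⟩
    · simp only [add_zero, abs_zero, sub_zero]
      rcases abs_cases (U - V) with ⟨h1, _⟩ | ⟨h1, _⟩ <;> linarith
    · simp only [abs_zero, sub_zero]
      rw [abs_of_nonneg hq0]; linarith
  have hct1 : 0 < ct := lt_of_le_of_ne hct0 (Ne.symm hc0)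
  set T := M + d with hTdef
  have hTq : q ≤ T := by linarith
  have hT : 0 < T := by
    by_contra hcon
    push_neg at hcon
    have hM0 : M = 0 := by linarith
    have hd0 : d = 0 := by linarith
    rw [hM0, hd0] at hcap
    simp at hcap
    linarith
  by_cases hP : ct ≤ U * T
  · -- strategy P: two nonnegative platforms r ≤ T
    obtain ⟨u, w, r, hu, hw0, hw1, hr0, hrT, huwK, heq⟩ := REP ct T U hct0 hT hP
    refine ⟨w, u, 0, r, T, ?_, ?_, by linarith⟩
    · rw [abs_of_nonneg hw0, abs_of_nonneg hu, abs_zero]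
      rcases abs_cases (U - V - (w + u + 0)) with ⟨h1, _⟩ | ⟨h1, _⟩ <;> linarith
    · rw [abs_of_nonneg hr0, abs_of_nonneg (by linarith : (0:ℤ) ≤ T - r),
        abs_of_nonpos (by linarith : q - T ≤ 0)]
      linarith
  · push_neg at hP
    have hUV : U < V := by
      by_contra hcon
      push_neg at hcon
      have h1 : V * d ≤ U * d := mul_le_mul_of_nonneg_right hcon hd
      nlinarith
    by_cases hq : q = 0
    · -- strategy N : two nonpositive platforms
      have hcap2 : ct ≤ V * T := by
        have h1 : U * M ≤ V * M := mul_le_mul_of_nonneg_right (le_of_lt hUV) hM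
        nlinarith
      obtain ⟨u, w, r, hu, hw0, hw1, hr0, hrT, huwK, heq⟩ := REP ct T V hct0 hT hcap2
      refine ⟨-w, -u, 0, -r, -T, ?_, ?_, by ring_nf; ring_nf at heq; linarith⟩
      · rw [abs_neg, abs_neg, abs_of_nonneg hw0, abs_of_nonneg hu, abs_zero]
        rcases abs_cases (U - V - (-w + -u + 0)) with ⟨h1, _⟩ | ⟨h1, _⟩ <;> linarith
      · rw [hq]
        rw [abs_neg, abs_of_nonneg hr0,
          show -T - -r = -(T - r) by ring, abs_neg,
          abs_of_nonneg (by linarith : (0:ℤ) ≤ T - r),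
          show (0:ℤ) - -T = T by ring, abs_of_nonneg (by linarith : (0:ℤ) ≤ T)]
        linarith
    · have hq1 : 1 ≤ q := lt_of_le_of_ne hq0 (Ne.symm hq)
      by_cases hctq : ct ≤ U * q
      · -- bulk at height q plus one remainder platform
        obtain ⟨u, w, r, hu, hw0, hw1, hr0, hrq, huwK, heq⟩ := REP ct q U hct0 hq1 hctq
        refine ⟨w, 0, u, r, q, ?_, ?_, by linarith⟩
        · rw [abs_of_nonneg hw0, abs_of_nonneg hu, abs_zero]
          rcases abs_cases (U - V - (w + 0 + u)) with ⟨h1, _⟩ | ⟨h1, _⟩ <;> linarith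
        · rw [abs_of_nonneg hr0, abs_of_nonneg (by linarith : (0:ℤ) ≤ q - r), sub_self, abs_zero]
          linarith
      · push_neg at hctq
        set h := T - q with hhdef
        have hh0 : 0 ≤ h := by linarith
        set R := ct - U * q with hRdef
        have hR0 : 0 ≤ R := by linarith
        have hRVh : R ≤ V * h := by
          have h1 : U * (M - q) ≤ V * (M - q) :=
            mul_le_mul_of_nonneg_right (le_of_lt hUV) (by linarith)
          have h2 : V * d ≤ V * d := le_refl _
          have : R ≤ U * M + V * d - U * q := by linarith
          have hexp : U * M - U * q = U * (M - q) := by ring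
          have hexp2 : V * h = V * (M - q) + V * d := by rw [hhdef, hTdef]; ring
          nlinarith
        by_cases hh : h = 0
        · -- pure bulk at q
          have hReq : R = 0 := by
            rw [hh] at hRVh; simp at hRVh; linarith
          refine ⟨0, 0, U, 0, q, ?_, ?_, by linarith⟩
          · rw [abs_zero, abs_of_nonneg hU]
            rcases abs_cases (U - V - (0 + 0 + U)) with ⟨h1, _⟩ | ⟨h1, _⟩ <;> linarith
          · rw [abs_zero, sub_zero, abs_of_nonneg hq0, sub_self, abs_zero]
            linarith
        · have hh1 : 0 < h := lt_of_le_of_ne hh0 (Ne.symm hh)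
          obtain ⟨u, w, r, hu, hw0, hw1, hr0, hrh, huwK, heq⟩ := REP R h V hR0 hh1 hRVh
          refine ⟨-w, -u, U, -r, -h, ?_, ?_, by ring_nf; ring_nf at heq; linarith⟩
          · rw [abs_neg, abs_neg, abs_of_nonneg hw0, abs_of_nonneg hu, abs_of_nonneg hU]
            rcases abs_cases (U - V - (-w + -u + U)) with ⟨h1, _⟩ | ⟨h1, _⟩ <;> linarith
          · rw [abs_neg, abs_of_nonneg hr0,
              show -h - -r = -(h - r) by ring, abs_neg,
              abs_of_nonneg (by linarith : (0:ℤ) ≤ h - r),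
              show q - -h = q + h by ring, abs_of_nonneg (by linarith : (0:ℤ) ≤ q + h)]
            linarith

/-- handles both signs of `c`, still `q ≥ 0`. -/
lemma arith_q (U V M d be q c : ℤ)
    (hU : 0 ≤ U) (hV : 0 ≤ V) (hM : 0 ≤ M) (hd : 0 ≤ d)
    (hq0 : 0 ≤ q) (hqM : q ≤ M)
    (hbe : 2 * (M + d) - q ≤ be)
    (hc1 : -(U * M + V * d) ≤ c) (hc2 : c ≤ V * M + U * d) :
    ∃ x2 x3 x4 Y1 Y2 : ℤ,
      |U - V - (x2 + x3 + x4)| + |x2| + |x3| + |x4| ≤ U + V ∧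
      |Y1| + |Y2 - Y1| + |q - Y2| ≤ be ∧
      x2 * Y1 + x3 * Y2 + x4 * q = -c := by
  by_cases hsgn : 0 ≤ -c
  · exact arith_core U V M d be q (-c) hU hV hM hd hq0 hqM hbe hsgn (by linarith)
  · push_neg at hsgn
    obtain ⟨x2, x3, x4, Y1, Y2, hbud, hcost, harea⟩ :=
      arith_core V U M d be q c hV hU hM hd hq0 hqM hbe (by linarith) (by linarith)
    refine ⟨-x2, -x3, -x4, Y1, Y2, ?_, hcost, by linarith [harea]⟩
    rw [abs_neg, abs_neg, abs_neg]
    have : U - V - (-x2 + -x3 + -x4) = -(V - U - (x2 + x3 + x4)) := by ring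
    rw [this, abs_neg]
    linarith [hbud]

/-- both signs of `q` and `c`. -/
lemma arith_full (U V M d be q c : ℤ)
    (hU : 0 ≤ U) (hV : 0 ≤ V) (hM : 0 ≤ M) (hd : 0 ≤ d)
    (hqM : q ≤ M) (hqd : -q ≤ d)
    (hbe : 2 * (M + d) - |q| ≤ be)
    (hc1 : -(U * M + V * d) ≤ c) (hc2 : c ≤ V * M + U * d) :
    ∃ x1 x2 x3 x4 y1 y2 y3 : ℤ,
      x1 + x2 + x3 + x4 = U - V ∧
      y1 + y2 + y3 = q ∧
      |x1| + |x2| + |x3| + |x4| ≤ U + V ∧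
      |y1| + |y2| + |y3| ≤ be ∧
      x2 * y1 + x3 * (y1 + y2) + x4 * (y1 + y2 + y3) = -c := by
  by_cases hq0 : 0 ≤ q
  · rw [abs_of_nonneg hq0] at hbe
    obtain ⟨x2, x3, x4, Y1, Y2, hbud, hcost, harea⟩ :=
      arith_q U V M d be q c hU hV hM hd hq0 hqM hbe hc1 hc2
    refine ⟨U - V - (x2 + x3 + x4), x2, x3, x4, Y1, Y2 - Y1, q - Y2,
      by ring, by ring, by linarith [hbud], by linarith [hcost], ?_⟩
    linear_combination harea
  · push_neg at hq0
    rw [abs_of_neg hq0] at hbe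
    obtain ⟨x2, x3, x4, Y1, Y2, hbud, hcost, harea⟩ :=
      arith_q U V d M be (-q) (-c) hU hV hd hM (by linarith) (by linarith)
        (by linarith) (by linarith) (by linarith)
    refine ⟨U - V - (x2 + x3 + x4), x2, x3, x4, -Y1, -(Y2 - Y1), q + Y2,
      by ring, by ring, by linarith [hbud], ?_, ?_⟩
    · rw [abs_neg, abs_neg]
      have : q + Y2 = -(-q - Y2) := by ring
      rw [this, abs_neg]
      linarith [hcost]
    · linear_combination -harea


-- ### length of apowS
lemma length_apowS (k : ℤ) : (apowS k).length = k.natAbs := by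
  unfold apowS
  split <;> simp <;> omega

-- ### block fold lemmas
lemma fold_rep_a_ff (n : ℕ) (s : St) (h : s.e = false) :
    List.foldl step s (List.replicate n SLetter.a)
      = ⟨s.U + n, s.V, s.q, s.c - n * s.q, s.be, s.M, s.d, false⟩ := by
  induction n generalizing s with
  | zero => cases s; simp_all
  | succ m ih =>
    rw [List.replicate_succ, List.foldl_cons]
    have hst : step s .a = ⟨s.U + 1, s.V, s.q, s.c - s.q, s.be, s.M, s.d, false⟩ := by
      simp [step, h]
    rw [hst, ih _ rfl]
    simp only [St.mk.injEq]
    push_cast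
    and_intros <;> first | trivial | ring

lemma fold_rep_A_ff (n : ℕ) (s : St) (h : s.e = false) :
    List.foldl step s (List.replicate n SLetter.A)
      = ⟨s.U, s.V + n, s.q, s.c + n * s.q, s.be, s.M, s.d, false⟩ := by
  induction n generalizing s with
  | zero => cases s; simp_all
  | succ m ih =>
    rw [List.replicate_succ, List.foldl_cons]
    have hst : step s .A = ⟨s.U, s.V + 1, s.q, s.c + s.q, s.be, s.M, s.d, false⟩ := by
      simp [step, h]
    rw [hst, ih _ rfl]
    simp only [St.mk.injEq]
    push_cast
    and_intros <;> first | trivial | ring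

lemma fold_rep_a_tt (n : ℕ) (s : St) (h : s.e = true) :
    (List.foldl step s (List.replicate n SLetter.a)).e = true ∧
    (List.foldl step s (List.replicate n SLetter.a)).U = s.U ∧
    (List.foldl step s (List.replicate n SLetter.a)).V = s.V ∧
    (List.foldl step s (List.replicate n SLetter.a)).q = s.q + n ∧
    (List.foldl step s (List.replicate n SLetter.a)).c = s.c := by
  induction n generalizing s with
  | zero => simp [h]
  | succ m ih =>
    rw [List.replicate_succ, List.foldl_cons]
    have hst : step s .a = ⟨s.U, s.V, s.q + 1, s.c, s.be + 1, max s.M (s.q + 1), s.d, true⟩ := by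
      simp [step, h]
    rw [hst]
    obtain ⟨h1, h2, h3, h4, h5⟩ := ih ⟨s.U, s.V, s.q + 1, s.c, s.be + 1, max s.M (s.q + 1), s.d, true⟩ rfl
    exact ⟨h1, h2, h3, by rw [h4]; push_cast; ring, h5⟩

lemma fold_rep_A_tt (n : ℕ) (s : St) (h : s.e = true) :
    (List.foldl step s (List.replicate n SLetter.A)).e = true ∧
    (List.foldl step s (List.replicate n SLetter.A)).U = s.U ∧
    (List.foldl step s (List.replicate n SLetter.A)).V = s.V ∧
    (List.foldl step s (List.replicate n SLetter.A)).q = s.q - n ∧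
    (List.foldl step s (List.replicate n SLetter.A)).c = s.c := by
  induction n generalizing s with
  | zero => simp [h]
  | succ m ih =>
    rw [List.replicate_succ, List.foldl_cons]
    have hst : step s .A = ⟨s.U, s.V, s.q - 1, s.c, s.be + 1, s.M, max s.d (-(s.q - 1)), true⟩ := by
      simp [step, h]
    rw [hst]
    obtain ⟨h1, h2, h3, h4, h5⟩ := ih ⟨s.U, s.V, s.q - 1, s.c, s.be + 1, s.M, max s.d (-(s.q - 1)), true⟩ rfl
    exact ⟨h1, h2, h3, by rw [h4]; push_cast; ring, h5⟩

lemma fold_apow_ff (s : St) (k : ℤ) (h : s.e = false) :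
    (List.foldl step s (apowS k)).e = false ∧
    (List.foldl step s (apowS k)).U - (List.foldl step s (apowS k)).V = s.U - s.V + k ∧
    (List.foldl step s (apowS k)).q = s.q ∧
    (List.foldl step s (apowS k)).c = s.c - k * s.q := by
  unfold apowS
  by_cases hk : 0 ≤ k
  · rw [if_pos hk, fold_rep_a_ff _ _ h]
    have : (k.toNat : ℤ) = k := Int.toNat_of_nonneg hk
    rw [this]
    exact ⟨rfl, by ring, rfl, rfl⟩
  · rw [if_neg hk, fold_rep_A_ff _ _ h]
    push_neg at hk
    have : ((-k).toNat : ℤ) = -k := Int.toNat_of_nonneg (by linarith)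
    rw [this]
    exact ⟨rfl, by ring, rfl, by ring⟩

lemma fold_apow_tt (s : St) (k : ℤ) (h : s.e = true) :
    (List.foldl step s (apowS k)).e = true ∧
    (List.foldl step s (apowS k)).U = s.U ∧
    (List.foldl step s (apowS k)).V = s.V ∧
    (List.foldl step s (apowS k)).q = s.q + k ∧
    (List.foldl step s (apowS k)).c = s.c := by
  unfold apowS
  by_cases hk : 0 ≤ k
  · have h2 := fold_rep_a_tt k.toNat s h
    rw [if_pos hk]
    have : (k.toNat : ℤ) = k := Int.toNat_of_nonneg hk
    rw [this] at h2
    exact h2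
  · have h2 := fold_rep_A_tt (-k).toNat s h
    rw [if_neg hk]
    push_neg at hk
    have : ((-k).toNat : ℤ) = -k := Int.toNat_of_nonneg (by linarith)
    rw [this] at h2
    obtain ⟨h1', h2', h3', h4', h5'⟩ := h2
    exact ⟨h1', h2', h3', by rw [h4']; ring, h5'⟩

/-- the candidate replacement word with six `t`s. -/
def mkW (x1 y1 x2 y2 x3 y3 x4 : ℤ) : List SLetter :=
  apowS x1 ++ SLetter.t :: (apowS y1 ++ SLetter.t :: (apowS x2 ++ SLetter.t ::
    (apowS y2 ++ SLetter.t :: (apowS x3 ++ SLetter.t :: (apowS y3 ++ SLetter.t :: apowS x4)))))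

lemma length_mkW (x1 y1 x2 y2 x3 y3 x4 : ℤ) :
    (mkW x1 y1 x2 y2 x3 y3 x4).length
      = x1.natAbs + y1.natAbs + x2.natAbs + y2.natAbs + x3.natAbs + y3.natAbs + x4.natAbs + 6 := by
  simp [mkW, length_apowS]
  ring

lemma step_t (s : St) : step s SLetter.t = ⟨s.U, s.V, s.q, s.c, s.be, s.M, s.d, !s.e⟩ := by
  simp [step]

lemma dat_mkW (x1 y1 x2 y2 x3 y3 x4 : ℤ) :
    (dat (mkW x1 y1 x2 y2 x3 y3 x4)).e = false ∧
    (dat (mkW x1 y1 x2 y2 x3 y3 x4)).U - (dat (mkW x1 y1 x2 y2 x3 y3 x4)).V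
        = x1 + x2 + x3 + x4 ∧
    (dat (mkW x1 y1 x2 y2 x3 y3 x4)).q = y1 + y2 + y3 ∧
    (dat (mkW x1 y1 x2 y2 x3 y3 x4)).c
        = -(x2 * y1 + x3 * (y1 + y2) + x4 * (y1 + y2 + y3)) := by
  have hfold : dat (mkW x1 y1 x2 y2 x3 y3 x4) =
      List.foldl step (step (List.foldl step (step (List.foldl step (step (List.foldl step
        (step (List.foldl step (step (List.foldl step (step (List.foldl step st0 (apowS x1))
        SLetter.t) (apowS y1)) SLetter.t) (apowS x2)) SLetter.t) (apowS y2)) SLetter.t)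
        (apowS x3)) SLetter.t) (apowS y3)) SLetter.t) (apowS x4) := by
    simp [dat, mkW, List.foldl_append]
  obtain ⟨e1, uv1, q1, c1⟩ := fold_apow_ff st0 x1 rfl
  set s1 := List.foldl step st0 (apowS x1) with hs1
  set s1t := step s1 SLetter.t with hs1t
  have e1t : s1t.e = true := by rw [hs1t, step_t]; simp [e1]
  have p1tU : s1t.U = s1.U := by rw [hs1t, step_t]
  have p1tV : s1t.V = s1.V := by rw [hs1t, step_t]
  have p1tq : s1t.q = s1.q := by rw [hs1t, step_t]
  have p1tc : s1t.c = s1.c := by rw [hs1t, step_t]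
  obtain ⟨e2, u2, v2, q2, c2⟩ := fold_apow_tt s1t y1 e1t
  set s2 := List.foldl step s1t (apowS y1) with hs2
  set s2t := step s2 SLetter.t with hs2t
  have e2t : s2t.e = false := by rw [hs2t, step_t]; simp [e2]
  have p2tU : s2t.U = s2.U := by rw [hs2t, step_t]
  have p2tV : s2t.V = s2.V := by rw [hs2t, step_t]
  have p2tq : s2t.q = s2.q := by rw [hs2t, step_t]
  have p2tc : s2t.c = s2.c := by rw [hs2t, step_t]
  obtain ⟨e3, uv3, q3, c3⟩ := fold_apow_ff s2t x2 e2t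
  set s3 := List.foldl step s2t (apowS x2) with hs3
  set s3t := step s3 SLetter.t with hs3t
  have e3t : s3t.e = true := by rw [hs3t, step_t]; simp [e3]
  have p3tU : s3t.U = s3.U := by rw [hs3t, step_t]
  have p3tV : s3t.V = s3.V := by rw [hs3t, step_t]
  have p3tq : s3t.q = s3.q := by rw [hs3t, step_t]
  have p3tc : s3t.c = s3.c := by rw [hs3t, step_t]
  obtain ⟨e4, u4, v4, q4, c4⟩ := fold_apow_tt s3t y2 e3t
  set s4 := List.foldl step s3t (apowS y2) with hs4
  set s4t := step s4 SLetter.t with hs4t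
  have e4t : s4t.e = false := by rw [hs4t, step_t]; simp [e4]
  have p4tU : s4t.U = s4.U := by rw [hs4t, step_t]
  have p4tV : s4t.V = s4.V := by rw [hs4t, step_t]
  have p4tq : s4t.q = s4.q := by rw [hs4t, step_t]
  have p4tc : s4t.c = s4.c := by rw [hs4t, step_t]
  obtain ⟨e5, uv5, q5, c5⟩ := fold_apow_ff s4t x3 e4t
  set s5 := List.foldl step s4t (apowS x3) with hs5
  set s5t := step s5 SLetter.t with hs5t
  have e5t : s5t.e = true := by rw [hs5t, step_t]; simp [e5]
  have p5tU : s5t.U = s5.U := by rw [hs5t, step_t]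
  have p5tV : s5t.V = s5.V := by rw [hs5t, step_t]
  have p5tq : s5t.q = s5.q := by rw [hs5t, step_t]
  have p5tc : s5t.c = s5.c := by rw [hs5t, step_t]
  obtain ⟨e6, u6, v6, q6, c6⟩ := fold_apow_tt s5t y3 e5t
  set s6 := List.foldl step s5t (apowS y3) with hs6
  set s6t := step s6 SLetter.t with hs6t
  have e6t : s6t.e = false := by rw [hs6t, step_t]; simp [e6]
  have p6tU : s6t.U = s6.U := by rw [hs6t, step_t]
  have p6tV : s6t.V = s6.V := by rw [hs6t, step_t]
  have p6tq : s6t.q = s6.q := by rw [hs6t, step_t]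
  have p6tc : s6t.c = s6.c := by rw [hs6t, step_t]
  obtain ⟨e7, uv7, q7, c7⟩ := fold_apow_ff s6t x4 e6t
  set s7 := List.foldl step s6t (apowS x4) with hs7
  rw [hfold]
  have z1 : st0.U = 0 := rfl
  have z2 : st0.V = 0 := rfl
  have z3 : st0.q = 0 := rfl
  have z4 : st0.c = 0 := rfl
  have t2 : s2t.q = y1 := by omega
  have t4 : s4t.q = y1 + y2 := by omega
  have t6 : s6t.q = y1 + y2 + y3 := by omega
  rw [z3, z4] at c1
  rw [t2] at c3
  rw [t4] at c5
  rw [t6] at c7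
  refine ⟨e7, by omega, by omega, by linarith [c1, c2, c3, c4, c5, c6, c7]⟩

theorem shorter_of_many_t (w : List SLetter) (h8 : 8 ≤ w.count SLetter.t) :
    ∃ w', evalS w' = evalS w ∧ w'.length < w.length := by
  obtain ⟨hU, hV, hM, hd, hqM, hqd, hbe, hc1, hc2⟩ := inv_dat w
  obtain ⟨x1, x2, x3, x4, y1, y2, y3, hx, hy, hbx, hby, harea⟩ :=
    arith_full (dat w).U (dat w).V (dat w).M (dat w).d (dat w).be (dat w).q (dat w).c
      hU hV hM hd hqM hqd hbe hc1 hc2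
  obtain ⟨me, muv, mq, mc⟩ := dat_mkW x1 y1 x2 y2 x3 y3 x4
  have hlen := dat_len w
  have h8' : (8:ℤ) ≤ (w.count SLetter.t : ℤ) := by exact_mod_cast h8
  have habs : (x1.natAbs : ℤ) + x2.natAbs + x3.natAbs + x4.natAbs
      + y1.natAbs + y2.natAbs + y3.natAbs ≤ (dat w).U + (dat w).V + (dat w).be := by
    simp only [← Int.abs_eq_natAbs]
    linarith
  have hlm : ((mkW x1 y1 x2 y2 x3 y3 x4).length : ℤ)
      = (x1.natAbs : ℤ) + y1.natAbs + x2.natAbs + y2.natAbs + x3.natAbs + y3.natAbs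
        + x4.natAbs + 6 := by
    rw [length_mkW]; push_cast; ring
  have harea' : (dat (mkW x1 y1 x2 y2 x3 y3 x4)).c = (dat w).c := by
    rw [mc, harea]; ring
  cases he : (dat w).e
  · refine ⟨mkW x1 y1 x2 y2 x3 y3 x4, ?_, ?_⟩
    · rw [EV, EV]
      apply Phi_proj
      · rw [muv, hx]
      · rw [mq, hy]
      · exact harea'
      · rw [me, he]
    · have hl : ((mkW x1 y1 x2 y2 x3 y3 x4).length : ℤ) < (w.length : ℤ) := by
        rw [hlm, ← hlen]
        linarith
      exact_mod_cast hl
  · refine ⟨mkW x1 y1 x2 y2 x3 y3 x4 ++ [SLetter.t], ?_, ?_⟩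
    · have hstep : dat (mkW x1 y1 x2 y2 x3 y3 x4 ++ [SLetter.t])
          = step (dat (mkW x1 y1 x2 y2 x3 y3 x4)) SLetter.t := by
        simp [dat, List.foldl_append]
      rw [EV, EV, hstep, step_t]
      apply Phi_proj
      · dsimp only; rw [muv, hx]
      · dsimp only; rw [mq, hy]
      · dsimp only; exact harea'
      · dsimp only; rw [me, he]; rfl
    · have hl : ((mkW x1 y1 x2 y2 x3 y3 x4 ++ [SLetter.t]).length : ℤ) < (w.length : ℤ) := by
        rw [List.length_append]
        simp only [List.length_singleton]
        push_cast [hlm]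
        rw [← hlen]
        linarith
      exact_mod_cast hl




/-- allowed adjacencies -/
def ok (x y : SLetter) : Prop :=
  ¬(x = .a ∧ y = .A) ∧ ¬(x = .A ∧ y = .a) ∧ ¬(x = .t ∧ y = .t)

instance : DecidableRel ok := fun x y => by unfold ok; infer_instance

lemma cancel_of_not_ok {x y : SLetter} (h : ¬ ok x y) : x.toV * y.toV = 1 := by
  cases x <;> cases y <;> simp [ok] at h <;>
    first
      | exact aA1
      | exact Aa1
      | exact tt1

lemma lenS_le (w : List SLetter) : lenS (evalS w) ≤ w.length :=
  Nat.sInf_le ⟨w, rfl, rfl⟩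

lemma geodesic_min {w w' : List SLetter} (hg : IsGeodesicS w) (h : evalS w' = evalS w) :
    w.length ≤ w'.length := by
  rw [IsGeodesicS] at hg
  rw [hg, ← h]
  exact lenS_le w'

lemma exists_bad_split :
    ∀ w : List SLetter, ¬ List.Chain' ok w →
      ∃ u x y v, w = u ++ x :: y :: v ∧ ¬ ok x y := by
  intro w
  induction w with
  | nil => intro h; exact absurd List.isChain_nil h
  | cons a rest ih =>
    intro h
    cases rest with
    | nil => exact absurd (List.isChain_singleton a) h
    | cons b rest' =>
      by_cases hab : ok a b
      · have hr : ¬ List.Chain' ok (b :: rest') := by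
          intro hc
          exact h (List.isChain_cons_cons.mpr ⟨hab, hc⟩)
        obtain ⟨u, x, y, v, heq, hbad⟩ := ih hr
        exact ⟨a :: u, x, y, v, by rw [heq]; rfl, hbad⟩
      · exact ⟨[], a, b, rest', rfl, hab⟩

lemma geodesic_chain' {w : List SLetter} (hg : IsGeodesicS w) : List.Chain' ok w := by
  by_contra h
  obtain ⟨u, x, y, v, heq, hbad⟩ := exists_bad_split w h
  have hval : evalS (u ++ v) = evalS w := by
    rw [heq]
    rw [show u ++ x :: y :: v = u ++ ([x, y] ++ v) by simp]
    rw [evalS_append, evalS_append, evalS_append]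
    have : evalS [x, y] = x.toV * y.toV := by simp [evalS]
    rw [this, cancel_of_not_ok hbad, one_mul]
  have hge := geodesic_min hg hval
  have : w.length = u.length + v.length + 2 := by rw [heq]; simp; omega
  rw [List.length_append] at hge
  omega

lemma geodesic_count_t {w : List SLetter} (hg : IsGeodesicS w) : w.count SLetter.t ≤ 7 := by
  by_contra h
  push_neg at h
  obtain ⟨w', hval, hlen⟩ := shorter_of_many_t w (by omega)
  have := geodesic_min hg hval
  omega

-- ### the counting side

def blockL (c : ℕ × Bool) : List SLetter :=
  List.replicate c.1 (if c.2 then SLetter.a else SLetter.A)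

def joinT : List (ℕ × Bool) → List SLetter
  | [] => []
  | [c] => blockL c
  | c :: c' :: rest => blockL c ++ SLetter.t :: joinT (c' :: rest)

def comps : ℕ → ℕ → Finset (List (ℕ × Bool))
  | 0, s => {[(s, true)], [(s, false)]}
  | k+1, s => (Finset.range (s+1)).biUnion fun j =>
      ((comps k (s - j)).image fun L => (j, true) :: L) ∪
      ((comps k (s - j)).image fun L => (j, false) :: L)

lemma hockey (s k : ℕ) :
    ∑ i ∈ Finset.range (s+1), (i + k).choose k = (s + k + 1).choose (k + 1) := by
  induction s with
  | zero => simp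
  | succ n ih =>
    rw [Finset.sum_range_succ, ih]
    have e1 : n + 1 + k = n + k + 1 := by ring
    rw [e1, Nat.choose_succ_succ' (n + k + 1) k]
    exact Nat.add_comm _ _

lemma card_comps (k : ℕ) : ∀ s : ℕ, (comps k s).card ≤ 2 ^ (k+1) * (s + k).choose k := by
  induction k with
  | zero =>
    intro s
    rw [comps]
    refine le_trans (Finset.card_insert_le _ _) ?_
    simp
  | succ k ih =>
    intro s
    rw [comps]
    refine le_trans Finset.card_biUnion_le ?_
    have hbound : ∀ j ∈ Finset.range (s+1),
        (((comps k (s - j)).image fun L => (j, true) :: L) ∪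
          ((comps k (s - j)).image fun L => (j, false) :: L)).card
          ≤ 2 ^ (k+2) * ((s - j) + k).choose k := by
      intro j hj
      refine le_trans (Finset.card_union_le _ _) ?_
      have h1 := Finset.card_image_le (s := comps k (s - j)) (f := fun L => (j, true) :: L)
      have h2 := Finset.card_image_le (s := comps k (s - j)) (f := fun L => (j, false) :: L)
      have h3 := ih (s - j)
      calc _ ≤ (comps k (s-j)).card + (comps k (s-j)).card := Nat.add_le_add h1 h2
        _ ≤ 2 ^ (k+1) * ((s-j) + k).choose k + 2 ^ (k+1) * ((s-j) + k).choose k :=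
            Nat.add_le_add h3 h3
        _ = 2 ^ (k+2) * ((s - j) + k).choose k := by ring
    refine le_trans (Finset.sum_le_sum hbound) ?_
    have hre : ∑ j ∈ Finset.range (s+1), 2 ^ (k+2) * ((s - j) + k).choose k
        = 2 ^ (k+2) * ∑ j ∈ Finset.range (s+1), ((s - j) + k).choose k := by
      rw [Finset.mul_sum]
    rw [hre]
    have href : ∑ j ∈ Finset.range (s+1), ((s - j) + k).choose k
        = ∑ i ∈ Finset.range (s+1), (i + k).choose k := by
      have := Finset.sum_range_reflect (fun i => (i + k).choose k) (s+1)
      rw [← this]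
      refine Finset.sum_congr rfl fun j hj => ?_
      simp only [Finset.mem_range] at hj
      have e : s + 1 - 1 - j = s - j := by omega
      rw [e]
    rw [href, hockey]
    exact le_refl _

lemma comps_ne_nil {k s : ℕ} {L : List (ℕ × Bool)} (h : L ∈ comps k s) : L ≠ [] := by
  cases k with
  | zero =>
    rw [comps] at h
    simp only [Finset.mem_insert, Finset.mem_singleton] at h
    rcases h with h | h <;> simp [h]
  | succ k =>
    rw [comps] at h
    simp only [Finset.mem_biUnion, Finset.mem_union, Finset.mem_image] at h
    obtain ⟨j, _, h | h⟩ := h <;> obtain ⟨L', _, hL⟩ := h <;> simp [← hL]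

lemma const_block :
    ∀ w : List SLetter, w.count SLetter.t = 0 → List.Chain' ok w →
      w = List.replicate w.length SLetter.a ∨ w = List.replicate w.length SLetter.A := by
  intro w
  induction w with
  | nil => intro _ _; left; rfl
  | cons x rest ih =>
    intro hcount hch
    have hxt : x ≠ SLetter.t := by
      intro hx
      rw [hx] at hcount
      simp [List.count_cons] at hcount
    have hrest_count : rest.count SLetter.t = 0 := by
      rw [List.count_cons] at hcount
      omega
    have hrest_ch : List.Chain' ok rest := hch.tail
    cases rest with
    | nil =>
      cases x with
      | a => left; rfl
      | A => right; rfl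
      | t => exact absurd rfl hxt
    | cons y rest' =>
      have hxy : ok x y := (List.isChain_cons_cons.mp hch).1
      have hyt : y ≠ SLetter.t := by
        intro hy
        rw [hy] at hrest_count
        simp [List.count_cons] at hrest_count
      have hxyeq : x = y := by
        cases x <;> cases y <;> simp_all [ok]
      rcases ih hrest_count hrest_ch with hr | hr
      · have hy : y = SLetter.a := by
          have := congrArg List.head? hr
          simpa [List.replicate_succ] using this
        left
        have hx' : x :: y :: rest' = SLetter.a :: (y :: rest') := by rw [hxyeq, hy]
        rw [hx', hr]
        simp [List.replicate_succ, List.length_cons]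
      · have hy : y = SLetter.A := by
          have := congrArg List.head? hr
          simpa [List.replicate_succ] using this
        right
        have hx' : x :: y :: rest' = SLetter.A :: (y :: rest') := by rw [hxyeq, hy]
        rw [hx', hr]
        simp [List.replicate_succ, List.length_cons]

lemma split_first_t :
    ∀ w : List SLetter, SLetter.t ∈ w →
      ∃ u v, w = u ++ SLetter.t :: v ∧ u.count SLetter.t = 0 := by
  intro w
  induction w with
  | nil => intro h; simp at h
  | cons x rest ih =>
    intro h
    by_cases hx : x = SLetter.t
    · exact ⟨[], rest, by rw [hx]; rfl, rfl⟩
    · have : SLetter.t ∈ rest := by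
        rcases List.mem_cons.mp h with h' | h'
        · exact absurd h'.symm hx
        · exact h'
      obtain ⟨u, v, heq, hu⟩ := ih this
      refine ⟨x :: u, v, by rw [heq]; rfl, ?_⟩
      simp [List.count_cons, hu, hx]

lemma decomp (k : ℕ) :
    ∀ w : List SLetter, List.Chain' ok w → w.count SLetter.t = k →
      ∃ L ∈ comps k (w.length - k), w = joinT L := by
  induction k with
  | zero =>
    intro w hch hcount
    rcases const_block w hcount hch with hr | hr
    · refine ⟨[(w.length, true)], ?_, ?_⟩
      · rw [comps]; simp
      · rw [joinT, blockL]
        simpa using hr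
    · refine ⟨[(w.length, false)], ?_, ?_⟩
      · rw [comps]; simp
      · rw [joinT, blockL]
        simpa using hr
  | succ k ih =>
    intro w hch hcount
    have hmem : SLetter.t ∈ w := by
      have : 0 < w.count SLetter.t := by omega
      exact List.count_pos_iff.mp this
    obtain ⟨u, v, heq, hu⟩ := split_first_t w hmem
    have hvcount : v.count SLetter.t = k := by
      rw [heq] at hcount
      simp [List.count_append, List.count_cons, hu] at hcount
      omega
    have hch_u : List.Chain' ok u := by
      rw [heq] at hch
      exact (List.isChain_append.mp hch).1
    have hch_v : List.Chain' ok v := by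
      rw [heq] at hch
      exact ((List.isChain_append.mp hch).2.1).tail
    obtain ⟨L', hL'mem, hL'⟩ := ih v hch_v hvcount
    have hkv : k ≤ v.length := by
      rw [← hvcount]
      exact List.count_le_length
    have hlen : w.length = u.length + 1 + v.length := by
      rw [heq]; simp; omega
    obtain hub := const_block u hu hch_u
    have hbex : ∃ b : Bool, u = blockL (u.length, b) := by
      rcases hub with h | h
      · exact ⟨true, by rw [blockL]; simpa using h⟩
      · exact ⟨false, by rw [blockL]; simpa using h⟩
    obtain ⟨b, hub'⟩ := hbex
    refine ⟨(u.length, b) :: L', ?_, ?_⟩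
    · rw [comps]
      simp only [Finset.mem_biUnion, Finset.mem_union, Finset.mem_image, Finset.mem_range]
      refine ⟨u.length, by omega, ?_⟩
      have hsub : w.length - (k+1) - u.length = v.length - k := by omega
      rw [hsub]
      cases b
      · right; exact ⟨L', hL'mem, rfl⟩
      · left; exact ⟨L', hL'mem, rfl⟩
    · cases L' with
      | nil => exact absurd hL'mem (by intro hc; exact comps_ne_nil hc rfl)
      | cons c rest =>
        rw [joinT, heq, ← hL']
        conv_lhs => rw [hub']

lemma choose_le_pow' (r k : ℕ) : r.choose k ≤ (r+1)^k := by
  induction r generalizing k with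
  | zero =>
    cases k <;> simp
  | succ r ih =>
    cases k with
    | zero => simp
    | succ k =>
      rw [Nat.choose_succ_succ]
      calc r.choose k + r.choose (k+1) ≤ (r+1)^k + (r+1)^(k+1) :=
            Nat.add_le_add (ih k) (ih (k+1))
        _ = (r+1)^k * (r+2) := by ring
        _ ≤ (r+2)^k * (r+2) := Nat.mul_le_mul_right _ (Nat.pow_le_pow_left (by omega) k)
        _ = (r+1+1)^(k+1) := by ring

theorem growth_bound (n : ℕ) :
    geodesicGrowthS n ≤
      ∑ r ∈ Finset.range (n + 1), ∑ k ∈ Finset.range 8, 2 ^ (k + 1) * r.choose k := by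
  classical
  set T : Finset (List SLetter) := (Finset.range (n+1)).biUnion (fun r =>
    (Finset.range (min 8 (r+1))).biUnion (fun k => (comps k (r - k)).image joinT)) with hT
  have hsub : { w : List SLetter | IsGeodesicS w ∧ w.length ≤ n } ⊆ ↑T := by
    intro w hw
    obtain ⟨hg, hlen⟩ := hw
    have hch := geodesic_chain' hg
    have hct := geodesic_count_t hg
    have hkr : w.count SLetter.t ≤ w.length := List.count_le_length
    obtain ⟨L, hLmem, hLeq⟩ := decomp (w.count SLetter.t) w hch rfl
    rw [hT]
    simp only [Finset.coe_biUnion, Set.mem_iUnion, Finset.mem_coe, Finset.mem_biUnion,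
      Finset.mem_range, Finset.mem_image]
    exact ⟨w.length, by omega, w.count SLetter.t, by omega, L, hLmem, hLeq.symm⟩
  have h1 : geodesicGrowthS n ≤ T.card := by
    rw [geodesicGrowthS]
    calc Set.ncard { w : List SLetter | IsGeodesicS w ∧ w.length ≤ n }
        ≤ (↑T : Set (List SLetter)).ncard := Set.ncard_le_ncard hsub T.finite_toSet
      _ = T.card := Set.ncard_coe_finset T
  refine le_trans h1 ?_
  refine le_trans Finset.card_biUnion_le ?_
  refine Finset.sum_le_sum fun r hr => ?_
  refine le_trans Finset.card_biUnion_le ?_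
  have hstep : ∑ k ∈ Finset.range (min 8 (r+1)), ((comps k (r - k)).image joinT).card
      ≤ ∑ k ∈ Finset.range (min 8 (r+1)), 2 ^ (k+1) * r.choose k := by
    refine Finset.sum_le_sum fun k hk => ?_
    simp only [Finset.mem_range] at hk
    have hk' : k ≤ r := by omega
    refine le_trans Finset.card_image_le ?_
    have hc := card_comps k (r - k)
    have e : r - k + k = r := by omega
    rwa [e] at hc
  refine le_trans hstep ?_
  refine Finset.sum_le_sum_of_subset ?_
  intro k hk
  simp only [Finset.mem_range] at *
  omega

theorem final_statement :
    (∀ n : ℕ, geodesicGrowthS n ≤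
      ∑ r ∈ Finset.range (n + 1), ∑ k ∈ Finset.range 8, 2 ^ (k + 1) * r.choose k) ∧
    ∃ p : Polynomial ℕ, p.natDegree = 8 ∧ ∀ n : ℕ, geodesicGrowthS n ≤ p.eval n := by
  constructor
  · exact growth_bound
  · refine ⟨Polynomial.C 512 * (Polynomial.X + 1) ^ 8, by compute_degree!, fun n => ?_⟩
    have heval : (Polynomial.C 512 * (Polynomial.X + 1 : Polynomial ℕ) ^ 8).eval n
        = 512 * (n+1)^8 := by
      simp [Polynomial.eval_mul, Polynomial.eval_pow]
    rw [heval]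
    refine le_trans (growth_bound n) ?_
    have hterm : ∀ r ∈ Finset.range (n+1), ∑ k ∈ Finset.range 8, 2 ^ (k+1) * r.choose k
        ≤ 510 * (n+1)^7 := by
      intro r hr
      simp only [Finset.mem_range] at hr
      have hbit : ∀ k ∈ Finset.range 8, 2 ^ (k+1) * r.choose k ≤ 2 ^ (k+1) * (n+1)^7 := by
        intro k hk
        simp only [Finset.mem_range] at hk
        refine Nat.mul_le_mul_left _ ?_
        calc r.choose k ≤ (r+1)^k := choose_le_pow' r k
          _ ≤ (n+1)^k := Nat.pow_le_pow_left (by omega) k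
          _ ≤ (n+1)^7 := Nat.pow_le_pow_right (by omega) (by omega)
      refine le_trans (Finset.sum_le_sum hbit) ?_
      have : ∑ k ∈ Finset.range 8, 2 ^ (k+1) * (n+1)^7
          = (∑ k ∈ Finset.range 8, 2 ^ (k+1)) * (n+1)^7 := by
        rw [Finset.sum_mul]
      rw [this]
      have h510 : (∑ k ∈ Finset.range 8, 2 ^ (k+1)) = 510 := by decide
      rw [h510]
    calc ∑ r ∈ Finset.range (n+1), ∑ k ∈ Finset.range 8, 2 ^ (k+1) * r.choose k
        ≤ ∑ _r ∈ Finset.range (n+1), 510 * (n+1)^7 := Finset.sum_le_sum hterm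
      _ = (n+1) * (510 * (n+1)^7) := by
          rw [Finset.sum_const, Finset.card_range]; ring
      _ ≤ 512 * (n+1)^8 := by nlinarith [pow_pos (Nat.succ_pos n) 7]


end VHW

/-- `γ_S(n) ≤ Σ_{r=0}^{n} Σ_{k=0}^{7} 2^{k+1}·C(r,k)` for all `n`; in
particular `γ_S` is bounded above by a polynomial of degree 8. -/
theorem geodesic_growth_polynomial_bound :
    (∀ n : ℕ, geodesicGrowthS n ≤
      ∑ r ∈ Finset.range (n + 1), ∑ k ∈ Finset.range 8, 2 ^ (k + 1) * r.choose k) ∧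
    ∃ p : Polynomial ℕ, p.natDegree = 8 ∧ ∀ n : ℕ, geodesicGrowthS n ≤ p.eval n :=
  VHW.final_statement
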